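/- Let A ∈ ℂ^{n×n}, B ∈ ℂ^{n×1}, m = 1, (A,B) reachable, R Hermitian PSD with R - A R A* = B H + H* B* for some H ∈ ℂ^{1×n}, and suppose Π_{N(R)} B = 0 (equivalently, the range of B is contained in the range of R). Then for every ℓ ≥ 0, Π_{N(R)} A^ℓ R = 0; consequently the range of R is A-invariant and contains R(A^ℓ B) for all ℓ. -/

import Mathlib

open Matrix ComplexOrder

/-- Scalar-input case: if `Π_{N(R)} B = 0` then `Π_{N(R)} Aℓ R = 0` for all
`ℓ ≥ 0`; in particular the range of `R` is `A`-invariant and contains the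
ranges of all `Aℓ B`. -/
theorem stmt_10 {n : ℕ} (A : Matrix (Fin n) (Fin n) ℂ)
    (B : Matrix (Fin n) (Fin 1) ℂ)
    (hreach : (Matrix.of fun (i : Fin n) (p : Fin n × Fin 1) =>
        (A ^ (p.1 : ℕ) * B) i p.2).rank = n)
    (R : Matrix (Fin n) (Fin n) ℂ) (hR : R.PosSemidef)
    (H : Matrix (Fin 1) (Fin n) ℂ)
    (hstein : R - A * R * Aᴴ = B * H + Hᴴ * Bᴴ)
    (P : Matrix (Fin n) (Fin n) ℂ) (hPh : P.IsHermitian) (hPP : P * P = P)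
    (hPrange : ∀ x : Fin n → ℂ, R *ᵥ x = 0 ↔ P *ᵥ x = x)
    (hPB : P * B = 0) :
    (∀ ℓ : ℕ, P * A ^ ℓ * R = 0) ∧
    (∀ x : Fin n → ℂ, (∃ y, x = R *ᵥ y) → ∃ z, A *ᵥ x = R *ᵥ z) ∧
    (∀ ℓ : ℕ, ∀ u : Fin 1 → ℂ, ∃ z, (A ^ ℓ * B) *ᵥ u = R *ᵥ z) := by
  have ext0 : ∀ M : Matrix (Fin n) (Fin n) ℂ, (∀ v, M *ᵥ v = 0) → M = 0 := by
    intro M h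
    ext i j
    have := congr_fun (h (Pi.single j 1)) i
    simpa [Matrix.mulVec_single] using this
  -- R * P = 0
  have hRP : R * P = 0 := by
    apply ext0
    intro v
    rw [← Matrix.mulVec_mulVec]
    refine (hPrange (P *ᵥ v)).2 ?_
    rw [Matrix.mulVec_mulVec, hPP]
  have hPR : P * R = 0 := by
    have := congrArg Matrix.conjTranspose hRP
    rwa [Matrix.conjTranspose_mul, hPh.eq, hR.1.eq, Matrix.conjTranspose_zero] at this
  -- P * A * R = 0
  have hBHP : Bᴴ * P = 0 := by
    have := congrArg Matrix.conjTranspose hPB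
    rwa [Matrix.conjTranspose_mul, hPh.eq, Matrix.conjTranspose_zero] at this
  have hPARAP : P * (A * R * Aᴴ) * P = 0 := by
    have h1 : P * (R - A * R * Aᴴ) * P = P * (B * H + Hᴴ * Bᴴ) * P := by rw [hstein]
    have h2 : P * (R - A * R * Aᴴ) * P = - (P * (A * R * Aᴴ) * P) := by
      rw [Matrix.mul_sub, Matrix.sub_mul, hPR]
      simp
    have h3 : P * (B * H + Hᴴ * Bᴴ) * P = 0 := by
      rw [Matrix.mul_add, Matrix.add_mul, ← Matrix.mul_assoc, ← Matrix.mul_assoc, hPB,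
        Matrix.mul_assoc (P * Hᴴ), hBHP]
      simp
    rw [h2, h3] at h1
    exact neg_eq_zero.mp h1
  open scoped MatrixOrder in
  set S := CFC.sqrt R with hS
  open scoped MatrixOrder in
  have hSS : S * S = R := CFC.sqrt_mul_sqrt_self R hR.nonneg
  open scoped MatrixOrder in
  have hSH : Sᴴ = S := (CFC.sqrt_nonneg R).posSemidef.1
  have hPAS : P * A * S = 0 := by
    rw [← Matrix.self_mul_conjTranspose_eq_zero]
    have : (P * A * S) * (P * A * S)ᴴ = P * (A * R * Aᴴ) * P := by
      rw [Matrix.conjTranspose_mul, Matrix.conjTranspose_mul, hSH, hPh.eq]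
      rw [← hSS]
      noncomm_ring
    rw [this, hPARAP]
  have hPAR : P * A * R = 0 := by
    rw [← hSS, ← Matrix.mul_assoc, hPAS, Matrix.zero_mul]
  -- membership lemma
  have mem : ∀ x : Fin n → ℂ, P *ᵥ x = 0 → ∃ z, x = R *ᵥ z := by
    intro x hx
    have hQ : Function.Injective (R + P).mulVecLin := by
      rw [← LinearMap.ker_eq_bot, LinearMap.ker_eq_bot']
      intro v hv
      simp only [Matrix.mulVecLin_apply, Matrix.add_mulVec] at hv
      have hdot : star v ⬝ᵥ R *ᵥ v + star v ⬝ᵥ P *ᵥ v = 0 := by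
        rw [← dotProduct_add, hv, dotProduct_zero]
      have hPpsd : P.PosSemidef := by
        have : P = Pᴴ * P := by rw [hPh.eq, hPP]
        rw [this]; exact Matrix.posSemidef_conjTranspose_mul_self P
      have h1 : (0:ℂ) ≤ star v ⬝ᵥ R *ᵥ v := hR.dotProduct_mulVec_nonneg v
      have h2 : (0:ℂ) ≤ star v ⬝ᵥ P *ᵥ v := hPpsd.dotProduct_mulVec_nonneg v
      have hRv0 : star v ⬝ᵥ R *ᵥ v = 0 :=
        le_antisymm (by calc star v ⬝ᵥ R *ᵥ v ≤ star v ⬝ᵥ R *ᵥ v + star v ⬝ᵥ P *ᵥ v :=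
              le_add_of_nonneg_right h2
            _ = 0 := hdot) h1
      have hPv0 : star v ⬝ᵥ P *ᵥ v = 0 :=
        le_antisymm (by calc star v ⬝ᵥ P *ᵥ v ≤ star v ⬝ᵥ R *ᵥ v + star v ⬝ᵥ P *ᵥ v :=
              le_add_of_nonneg_left h1
            _ = 0 := hdot) h2
      have hRv : R *ᵥ v = 0 := (hR.dotProduct_mulVec_zero_iff v).1 hRv0
      have hPv : P *ᵥ v = 0 := (hPpsd.dotProduct_mulVec_zero_iff v).1 hPv0
      have := (hPrange v).1 hRv
      rw [hPv] at this
      exact this.symm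
    have hsurj : Function.Surjective (R + P).mulVecLin :=
      LinearMap.injective_iff_surjective.mp hQ
    obtain ⟨z, hz⟩ := hsurj x
    simp only [Matrix.mulVecLin_apply, Matrix.add_mulVec] at hz
    have hPz : P *ᵥ z = 0 := by
      have h : P *ᵥ (R *ᵥ z) + P *ᵥ (P *ᵥ z) = 0 := by
        rw [← Matrix.mulVec_add, hz, hx]
      rwa [Matrix.mulVec_mulVec, Matrix.mulVec_mulVec, hPR, hPP, Matrix.zero_mulVec,
        zero_add] at h
    exact ⟨z, by rw [← hz, hPz, add_zero]⟩
  have goal1 : ∀ ℓ : ℕ, P * A ^ ℓ * R = 0 := by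
    intro ℓ
    induction ℓ with
    | zero => simpa using hPR
    | succ k ih =>
      apply ext0
      intro v
      have h1 : P *ᵥ ((A ^ k * R) *ᵥ v) = 0 := by
        rw [Matrix.mulVec_mulVec, ← Matrix.mul_assoc, ih, Matrix.zero_mulVec]
      obtain ⟨z, hz⟩ := mem _ h1
      have hmat : P * A ^ (k + 1) * R = (P * A) * (A ^ k * R) := by
        rw [pow_succ']
        noncomm_ring
      rw [hmat, ← Matrix.mulVec_mulVec, hz, Matrix.mulVec_mulVec, hPAR, Matrix.zero_mulVec]
  have goal2 : ∀ x : Fin n → ℂ, (∃ y, x = R *ᵥ y) → ∃ z, A *ᵥ x = R *ᵥ z := by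
    rintro x ⟨y, rfl⟩
    refine mem _ ?_
    rw [Matrix.mulVec_mulVec, Matrix.mulVec_mulVec, hPAR, Matrix.zero_mulVec]
  refine ⟨goal1, goal2, ?_⟩
  intro ℓ
  induction ℓ with
  | zero =>
    intro u
    refine mem _ ?_
    simp only [pow_zero, Matrix.one_mul, Matrix.mulVec_mulVec, hPB, Matrix.zero_mulVec]
  | succ k ih =>
    intro u
    obtain ⟨z, hz⟩ := ih u
    have hmat : (A ^ (k + 1) * B) *ᵥ u = A *ᵥ ((A ^ k * B) *ᵥ u) := by
      rw [Matrix.mulVec_mulVec, ← Matrix.mul_assoc, ← pow_succ']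
    rw [hmat, hz]
    exact goal2 _ ⟨z, rfl⟩
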